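/- Let K be a field with char K ≠ 2, let (V, c) be a braided vector space over K such that c is of Hecke type of mark λ with λ ≠ 0 and (3)!_λ ≠ 0, and let b be a c-bracket on (V, c) such that the canonical map ι_{c,b} : V → U(V, c, b) is injective. Then b ∘ c = −b, b ∘ b₁ ∘ (λ²·id_{V⊗V⊗V} − λ·c₂ + c₂ ∘ c₁) = 0, and b ∘ b₂ ∘ (λ²·id_{V⊗V⊗V} − λ·c₁ + c₁ ∘ c₂) = 0. -/

import Mathlib

open TensorProduct

noncomputable section

variable {K : Type*} [Field K] {V : Type*} [AddCommGroup V] [Module K V]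

/-- The endomorphism `c ⊗ id_V` of `V ⊗ (V ⊗ V)` (transported along associativity). -/
def opC1 (c : V ⊗[K] V →ₗ[K] V ⊗[K] V) :
    V ⊗[K] (V ⊗[K] V) →ₗ[K] V ⊗[K] (V ⊗[K] V) :=
  (TensorProduct.assoc K V V V).toLinearMap ∘ₗ
    LinearMap.rTensor V c ∘ₗ (TensorProduct.assoc K V V V).symm.toLinearMap

/-- The endomorphism `id_V ⊗ c` of `V ⊗ (V ⊗ V)`. -/
def opC2 (c : V ⊗[K] V →ₗ[K] V ⊗[K] V) :
    V ⊗[K] (V ⊗[K] V) →ₗ[K] V ⊗[K] (V ⊗[K] V) :=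
  LinearMap.lTensor V c

/-- The map `b ⊗ id_V : V ⊗ (V ⊗ V) → V ⊗ V`. -/
def opB1 (b : V ⊗[K] V →ₗ[K] V) :
    V ⊗[K] (V ⊗[K] V) →ₗ[K] V ⊗[K] V :=
  LinearMap.rTensor V b ∘ₗ (TensorProduct.assoc K V V V).symm.toLinearMap

/-- The map `id_V ⊗ b : V ⊗ (V ⊗ V) → V ⊗ V`. -/
def opB2 (b : V ⊗[K] V →ₗ[K] V) :
    V ⊗[K] (V ⊗[K] V) →ₗ[K] V ⊗[K] V :=
  LinearMap.lTensor V b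

/-- The braid equation `c₁ ∘ c₂ ∘ c₁ = c₂ ∘ c₁ ∘ c₂`. -/
def BraidEq (c : V ⊗[K] V →ₗ[K] V ⊗[K] V) : Prop :=
  opC1 c ∘ₗ opC2 c ∘ₗ opC1 c = opC2 c ∘ₗ opC1 c ∘ₗ opC2 c

/-- `c` is of Hecke type of mark `lam`: `(c + id) ∘ (c - lam • id) = 0`. -/
def IsHecke (lam : K) (c : V ⊗[K] V →ₗ[K] V ⊗[K] V) : Prop :=
  (c + LinearMap.id) ∘ₗ (c - lam • LinearMap.id) = 0

/-- `b` is a `c`-bracket: `c ∘ b₁ = b₂ ∘ c₁ ∘ c₂` and `c ∘ b₂ = b₁ ∘ c₂ ∘ c₁`. -/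
def IsBracket (c : V ⊗[K] V →ₗ[K] V ⊗[K] V) (b : V ⊗[K] V →ₗ[K] V) : Prop :=
  c ∘ₗ opB1 b = opB2 b ∘ₗ opC1 c ∘ₗ opC2 c ∧
  c ∘ₗ opB2 b = opB1 b ∘ₗ opC2 c ∘ₗ opC1 c

/-- The linear map `V ⊗ V → T(V)`, `v ⊗ w ↦ ι v * ι w`. -/
def tensMul : V ⊗[K] V →ₗ[K] TensorAlgebra K V :=
  LinearMap.mul' K (TensorAlgebra K V) ∘ₗ
    TensorProduct.map (TensorAlgebra.ι K) (TensorAlgebra.ι K)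

/-- The relation on `T(V)` whose associated ring quotient is
`U(V,c,b) = T(V)/(c(z) - lam•z - b(z) : z ∈ V ⊗ V)`. -/
def envRel (lam : K) (c : V ⊗[K] V →ₗ[K] V ⊗[K] V) (b : V ⊗[K] V →ₗ[K] V) :
    TensorAlgebra K V → TensorAlgebra K V → Prop :=
  fun x y => ∃ z : V ⊗[K] V,
    x = tensMul (c z) ∧ y = lam • tensMul z + TensorAlgebra.ι K (b z)

/-- The canonical map `ι_{c,b} : V → U(V,c,b)`. -/
def envIota (lam : K) (c : V ⊗[K] V →ₗ[K] V ⊗[K] V) (b : V ⊗[K] V →ₗ[K] V) :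
    V →ₗ[K] RingQuot (envRel lam c b) :=
  (RingQuot.mkAlgHom K (envRel lam c b)).toLinearMap ∘ₗ TensorAlgebra.ι K

/-- The q-integer `(n)_lam = 1 + lam + ⋯ + lam^(n-1)`. -/
def qInt (lam : K) (n : ℕ) : K := ∑ i ∈ Finset.range n, lam ^ i

/-- The q-factorial `(n)!_lam = (1)_lam (2)_lam ⋯ (n)_lam`. -/
def qFac (lam : K) (n : ℕ) : K := ∏ i ∈ Finset.range n, qInt lam (i + 1)


-- helper lemmas
private lemma assoc_cancel1 :
    (TensorProduct.assoc K V V V).toLinearMap ∘ₗ (TensorProduct.assoc K V V V).symm.toLinearMap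
      = LinearMap.id := by
  rw [LinearEquiv.comp_coe, LinearEquiv.symm_trans_self, LinearEquiv.refl_toLinearMap]

private lemma assoc_cancel2 :
    (TensorProduct.assoc K V V V).symm.toLinearMap ∘ₗ (TensorProduct.assoc K V V V).toLinearMap
      = LinearMap.id := by
  rw [LinearEquiv.comp_coe, LinearEquiv.self_trans_symm, LinearEquiv.refl_toLinearMap]

private lemma assoc_cancel2' {W : Type*} [AddCommGroup W] [Module K W]
    (h : W →ₗ[K] (V ⊗[K] V) ⊗[K] V) :
    (TensorProduct.assoc K V V V).symm.toLinearMap ∘ₗ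
      ((TensorProduct.assoc K V V V).toLinearMap ∘ₗ h) = h := by
  rw [← LinearMap.comp_assoc, assoc_cancel2, LinearMap.id_comp]

private lemma opC1_comp (f g : V ⊗[K] V →ₗ[K] V ⊗[K] V) :
    opC1 (K := K) (f ∘ₗ g) = opC1 f ∘ₗ opC1 g := by
  unfold opC1
  simp only [LinearMap.comp_assoc, assoc_cancel2', LinearMap.rTensor_comp]

private lemma opC1_id : opC1 (K := K) (V := V) LinearMap.id = LinearMap.id := by
  unfold opC1
  rw [LinearMap.rTensor_id, LinearMap.id_comp, assoc_cancel1]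

private lemma opC1_add (f g : V ⊗[K] V →ₗ[K] V ⊗[K] V) :
    opC1 (K := K) (f + g) = opC1 f + opC1 g := by
  unfold opC1
  rw [LinearMap.rTensor_add, LinearMap.add_comp, LinearMap.comp_add]

private lemma opC1_smul (a : K) (f : V ⊗[K] V →ₗ[K] V ⊗[K] V) :
    opC1 (K := K) (a • f) = a • opC1 f := by
  unfold opC1
  rw [LinearMap.rTensor_smul, LinearMap.smul_comp, LinearMap.comp_smul]

private lemma opB1_comp_opC1 (f : V ⊗[K] V →ₗ[K] V) (g : V ⊗[K] V →ₗ[K] V ⊗[K] V) :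
    opB1 (K := K) f ∘ₗ opC1 g = opB1 (f ∘ₗ g) := by
  unfold opB1 opC1
  simp only [LinearMap.comp_assoc, assoc_cancel2', LinearMap.rTensor_comp]

private lemma opB1_neg (f : V ⊗[K] V →ₗ[K] V) : opB1 (K := K) (-f) = -opB1 f := by
  unfold opB1
  rw [LinearMap.rTensor_neg, LinearMap.neg_comp]

private lemma opB2_comp_opC2 (f : V ⊗[K] V →ₗ[K] V) (g : V ⊗[K] V →ₗ[K] V ⊗[K] V) :
    opB2 (K := K) f ∘ₗ opC2 g = opB2 (f ∘ₗ g) := by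
  unfold opB2 opC2
  rw [LinearMap.lTensor_comp]

set_option maxHeartbeats 2000000 in
/-- If `char K ≠ 2`, `(V,c)` is a braided vector space of Hecke type of mark `lam ≠ 0`
with `(3)!_lam ≠ 0`, `b` is a `c`-bracket and `ι_{c,b} : V → U(V,c,b)` is injective, then
`b ∘ c = -b`, `b ∘ b₁ ∘ (lam²•id - lam•c₂ + c₂∘c₁) = 0` and
`b ∘ b₂ ∘ (lam²•id - lam•c₁ + c₁∘c₂) = 0`. -/
theorem bracket_identities_of_envIota_injective
    (hchar : ringChar K ≠ 2) (lam : K) (hlam0 : lam ≠ 0) (hfac : qFac lam 3 ≠ 0)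
    (c : V ⊗[K] V →ₗ[K] V ⊗[K] V) (hbraid : BraidEq c) (hHecke : IsHecke lam c)
    (b : V ⊗[K] V →ₗ[K] V) (hb : IsBracket c b)
    (hinj : Function.Injective (envIota lam c b)) :
    b ∘ₗ c = -b ∧
    b ∘ₗ opB1 b ∘ₗ (lam ^ 2 • LinearMap.id - lam • opC2 c + opC2 c ∘ₗ opC1 c) = 0 ∧
    b ∘ₗ opB2 b ∘ₗ (lam ^ 2 • LinearMap.id - lam • opC1 c + opC1 c ∘ₗ opC2 c) = 0 := by
  classical
  obtain ⟨hcb1, hcb2⟩ := hb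
  -- scalar facts
  have h2K : (2 : K) ≠ 0 := by
    intro h
    have hdvd : ringChar K ∣ 2 := (CharP.cast_eq_zero_iff K (ringChar K) 2).mp (by exact_mod_cast h)
    rcases (Nat.dvd_prime Nat.prime_two).mp hdvd with h1 | h1
    · have : ((1 : ℕ) : K) = 0 := (CharP.cast_eq_zero_iff K (ringChar K) 1).mpr (h1 ▸ dvd_refl _)
      simp at this
    · exact hchar h1
  have hfac3 : qFac lam 3 = (1 + lam) * (1 + lam + lam ^ 2) := by
    simp only [qFac, qInt, Finset.prod_range_succ, Finset.prod_range_zero,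
      Finset.sum_range_succ, Finset.sum_range_zero]
    ring
  have hl2 : (1 : K) + lam ≠ 0 := by
    intro h; apply hfac; rw [hfac3, h, zero_mul]
  have hl3 : (1 : K) + lam + lam ^ 2 ≠ 0 := by
    intro h; apply hfac; rw [hfac3, h, mul_zero]
  -- Hecke expanded
  have hcc : c ∘ₗ c = (lam - 1) • c + lam • LinearMap.id := by
    have h := hHecke
    unfold IsHecke at h
    simp only [LinearMap.comp_sub, LinearMap.add_comp, LinearMap.comp_smul,
      LinearMap.comp_id, LinearMap.id_comp, smul_add] at h
    linear_combination (norm := module) h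
  have hxx : opC1 c ∘ₗ opC1 c = (lam - 1) • opC1 c + lam • LinearMap.id := by
    rw [← opC1_comp, hcc, opC1_add, opC1_smul, opC1_smul, opC1_id]
  have hyy : opC2 c ∘ₗ opC2 c = (lam - 1) • opC2 c + lam • LinearMap.id := by
    unfold opC2
    rw [← LinearMap.lTensor_comp, hcc]
    simp only [LinearMap.lTensor_add, LinearMap.lTensor_smul, LinearMap.lTensor_id]
  -- the enveloping algebra maps
  set e := envIota lam c b with he
  set M : V ⊗[K] V →ₗ[K] RingQuot (envRel lam c b) :=
    (RingQuot.mkAlgHom K (envRel lam c b)).toLinearMap ∘ₗ tensMul with hM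
  have FM : ∀ z : V ⊗[K] V, M (c z) = lam • M z + e (b z) := by
    intro z
    have hrel : envRel lam c b (tensMul (c z)) (lam • tensMul z + TensorAlgebra.ι K (b z)) :=
      ⟨z, rfl, rfl⟩
    have h := RingQuot.mkAlgHom_rel K hrel
    simpa [hM, he, envIota, map_add, map_smul] using h
  have hMpure : ∀ v w : V, M (v ⊗ₜ[K] w) = e v * e w := by
    intro v w
    simp [hM, he, envIota, tensMul, LinearMap.mul'_apply, map_mul]
  -- part 1 : b ∘ c = -b
  have hbc : b ∘ₗ c = -b := by
    apply LinearMap.ext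
    intro z
    have h1 : c (c z + z) = lam • (c z + z) := by
      have h := LinearMap.congr_fun hcc z
      simp only [LinearMap.comp_apply, LinearMap.add_apply, LinearMap.smul_apply,
        LinearMap.id_apply] at h
      rw [map_add, h, smul_add]
      module
    have h2 := FM (c z + z)
    rw [h1, map_smul] at h2
    have h3 : e (b (c z + z)) = 0 := by linear_combination (norm := module) -h2
    have h4 : b (c z + z) = 0 := hinj (by rw [h3, map_zero])
    rw [map_add] at h4
    simp only [LinearMap.comp_apply, LinearMap.neg_apply]
    linear_combination (norm := module) h4
  -- composed bracket identities
  have hb1x : opB1 b ∘ₗ opC1 c = -opB1 b := by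
    rw [opB1_comp_opC1, hbc, opB1_neg]
  have hb2y : opB2 b ∘ₗ opC2 c = -opB2 b := by
    rw [opB2_comp_opC2, hbc]
    unfold opB2
    rw [LinearMap.lTensor_neg]
  -- triple product P and its relations
  set P : V ⊗[K] (V ⊗[K] V) →ₗ[K] RingQuot (envRel lam c b) :=
    LinearMap.mul' K _ ∘ₗ TensorProduct.map e M with hP
  set Q : (V ⊗[K] V) ⊗[K] V →ₗ[K] RingQuot (envRel lam c b) :=
    LinearMap.mul' K _ ∘ₗ TensorProduct.map M e with hQ
  have hPQ : P ∘ₗ (TensorProduct.assoc K V V V).toLinearMap = Q := by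
    apply TensorProduct.ext_threefold
    intro u v w
    simp only [hP, hQ, LinearMap.comp_apply, LinearEquiv.coe_coe, TensorProduct.assoc_tmul,
      TensorProduct.map_tmul, LinearMap.mul'_apply, hMpure, mul_assoc]
  have R3 : P ∘ₗ opC2 c = lam • P + M ∘ₗ opB2 b := by
    apply TensorProduct.ext'
    intro v z
    simp only [LinearMap.comp_apply, LinearMap.add_apply, LinearMap.smul_apply]
    unfold opC2 opB2
    rw [LinearMap.lTensor_tmul, LinearMap.lTensor_tmul]
    simp only [hP, LinearMap.comp_apply, TensorProduct.map_tmul, LinearMap.mul'_apply]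
    rw [FM z, mul_add, hMpure]
    rw [mul_smul_comm]
  have R2 : P ∘ₗ opC1 c = lam • P + M ∘ₗ opB1 b := by
    have hQc : Q ∘ₗ LinearMap.rTensor V c = lam • Q + M ∘ₗ LinearMap.rTensor V b := by
      apply TensorProduct.ext'
      intro z w
      simp only [LinearMap.comp_apply, LinearMap.add_apply, LinearMap.smul_apply]
      rw [LinearMap.rTensor_tmul, LinearMap.rTensor_tmul]
      simp only [hQ, LinearMap.comp_apply, TensorProduct.map_tmul, LinearMap.mul'_apply]
      rw [FM z, add_mul, hMpure, smul_mul_assoc]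
    have expand : P ∘ₗ opC1 c
        = ((P ∘ₗ (TensorProduct.assoc K V V V).toLinearMap) ∘ₗ LinearMap.rTensor V c) ∘ₗ
          (TensorProduct.assoc K V V V).symm.toLinearMap := by
      unfold opC1
      simp only [LinearMap.comp_assoc]
    rw [expand, hPQ, hQc, LinearMap.add_comp, LinearMap.smul_comp, ← hPQ]
    simp only [LinearMap.comp_assoc, assoc_cancel1, LinearMap.comp_id]
    rfl
  -- composed bracket rewriting lemmas
  have hcb1y : c ∘ₗ (opB1 b ∘ₗ opC2 c)
      = (lam - 1) • (c ∘ₗ opB1 b) + lam • (opB2 b ∘ₗ opC1 c) := by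
    rw [← LinearMap.comp_assoc, hcb1, LinearMap.comp_assoc, LinearMap.comp_assoc, hyy]
    simp only [LinearMap.comp_add, LinearMap.comp_smul, LinearMap.comp_id]
  have hcb2x : c ∘ₗ (opB2 b ∘ₗ opC1 c)
      = (lam - 1) • (c ∘ₗ opB2 b) + lam • (opB1 b ∘ₗ opC2 c) := by
    rw [← LinearMap.comp_assoc, hcb2, LinearMap.comp_assoc, LinearMap.comp_assoc, hxx]
    simp only [LinearMap.comp_add, LinearMap.comp_smul, LinearMap.comp_id]
  -- the mixed syzygy
  set Am : V ⊗[K] (V ⊗[K] V) →ₗ[K] V ⊗[K] (V ⊗[K] V) :=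
    opC2 c ∘ₗ opC1 c - lam • opC2 c - lam • opC1 c + (lam ^ 2 - lam) • LinearMap.id with hAm
  set Bm : V ⊗[K] (V ⊗[K] V) →ₗ[K] V ⊗[K] (V ⊗[K] V) :=
    opC1 c ∘ₗ opC2 c - lam • opC1 c - lam • opC2 c + (lam ^ 2 - lam) • LinearMap.id with hBm
  have OPID : opC1 c ∘ₗ Am - lam • Am = opC2 c ∘ₗ Bm - lam • Bm := by
    rw [hAm, hBm]
    simp only [LinearMap.comp_add, LinearMap.comp_sub, LinearMap.comp_smul, LinearMap.comp_id,
      ← LinearMap.comp_assoc, hxx, hyy]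
    simp only [LinearMap.comp_assoc]
    have hbr := hbraid
    unfold BraidEq at hbr
    rw [hbr]
    module
  have SYZmap : M ∘ₗ (opB1 b ∘ₗ Am) = M ∘ₗ (opB2 b ∘ₗ Bm) := by
    have h0 := congrArg (fun f => P ∘ₗ f) OPID
    simp only [LinearMap.comp_sub, LinearMap.comp_smul] at h0
    rw [← LinearMap.comp_assoc, ← LinearMap.comp_assoc, R2, R3] at h0
    simp only [LinearMap.add_comp, LinearMap.smul_comp, LinearMap.comp_assoc] at h0
    haveI : IsRightCancelAdd (V ⊗[K] (V ⊗[K] V) →ₗ[K] RingQuot (envRel lam c b)) := by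
      letI : AddGroup (V ⊗[K] (V ⊗[K] V) →ₗ[K] RingQuot (envRel lam c b)) :=
        LinearMap.addCommGroup.toAddGroup
      infer_instance
    linear_combination (norm := module) h0
  -- pointwise relations (valid for every lam)
  have A7 : ∀ t : V ⊗[K] (V ⊗[K] V),
      lam • M (opB1 b (opC2 c t)) + e (b (opB1 b (opC2 c t)))
        = (lam - 1) • (lam • M (opB1 b t) + e (b (opB1 b t)))
          + lam • M (opB2 b (opC1 c t)) := by
    intro t
    have h1 := FM (opB1 b (opC2 c t))
    have h2 := LinearMap.congr_fun hcb1y t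
    simp only [LinearMap.comp_apply, LinearMap.add_apply, LinearMap.smul_apply] at h2
    rw [h2, map_add, map_smul, map_smul, FM (opB1 b t)] at h1
    linear_combination (norm := module) -h1
  have A8 : ∀ t : V ⊗[K] (V ⊗[K] V),
      lam • M (opB2 b (opC1 c t)) + e (b (opB2 b (opC1 c t)))
        = (lam - 1) • (lam • M (opB2 b t) + e (b (opB2 b t)))
          + lam • M (opB1 b (opC2 c t)) := by
    intro t
    have h1 := FM (opB2 b (opC1 c t))
    have h2 := LinearMap.congr_fun hcb2x t
    simp only [LinearMap.comp_apply, LinearMap.add_apply, LinearMap.smul_apply] at h2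
    rw [h2, map_add, map_smul, map_smul, FM (opB2 b t)] at h1
    linear_combination (norm := module) -h1
  have A9 : ∀ t : V ⊗[K] (V ⊗[K] V),
      (lam • M (opB2 b t) + e (b (opB2 b t))) - lam • M (opB1 b (opC2 c t))
          + lam ^ 2 • M (opB1 b t)
        = (lam • M (opB1 b t) + e (b (opB1 b t))) - lam • M (opB2 b (opC1 c t))
          + lam ^ 2 • M (opB2 b t) := by
    intro t
    have h1 := LinearMap.congr_fun SYZmap t
    simp only [LinearMap.comp_apply, hAm, hBm, LinearMap.sub_apply, LinearMap.add_apply,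
      LinearMap.smul_apply, LinearMap.id_apply, map_add, map_sub, map_smul] at h1
    have e1 := LinearMap.congr_fun hcb2 t
    simp only [LinearMap.comp_apply] at e1
    have e2 := LinearMap.congr_fun hb1x t
    simp only [LinearMap.comp_apply, LinearMap.neg_apply] at e2
    have e3 := LinearMap.congr_fun hcb1 t
    simp only [LinearMap.comp_apply] at e3
    have e4 := LinearMap.congr_fun hb2y t
    simp only [LinearMap.comp_apply, LinearMap.neg_apply] at e4
    rw [← e1, ← e3, e2, e4, map_neg, map_neg, FM (opB2 b t), FM (opB1 b t)] at h1
    linear_combination (norm := module) h1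
  -- pointwise helper rewrites
  have pcb2 : ∀ t : V ⊗[K] (V ⊗[K] V), opB1 b (opC2 c (opC1 c t)) = c (opB2 b t) := by
    intro t
    have h := LinearMap.congr_fun hcb2 t
    simp only [LinearMap.comp_apply] at h
    exact h.symm
  have pcb1 : ∀ t : V ⊗[K] (V ⊗[K] V), opB2 b (opC1 c (opC2 c t)) = c (opB1 b t) := by
    intro t
    have h := LinearMap.congr_fun hcb1 t
    simp only [LinearMap.comp_apply] at h
    exact h.symm
  have pbc : ∀ z : V ⊗[K] V, b (c z) = -(b z) := by
    intro z
    have h := LinearMap.congr_fun hbc z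
    simpa only [LinearMap.comp_apply, LinearMap.neg_apply] using h
  have main : (b ∘ₗ opB1 b ∘ₗ (lam ^ 2 • LinearMap.id - lam • opC2 c + opC2 c ∘ₗ opC1 c) = 0) ∧
      (b ∘ₗ opB2 b ∘ₗ (lam ^ 2 • LinearMap.id - lam • opC1 c + opC1 c ∘ₗ opC2 c) = 0) := by
    by_cases hl1 : lam = 1
    · -- classical case lam = 1
      subst hl1
      constructor
      · apply LinearMap.ext
        intro t
        simp only [LinearMap.comp_apply, LinearMap.sub_apply, LinearMap.add_apply,
          LinearMap.smul_apply, LinearMap.id_apply, LinearMap.zero_apply, one_pow, one_smul]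
        apply hinj
        rw [map_zero]
        simp only [map_add, map_sub]
        rw [pcb2 t, pbc (opB2 b t)]
        simp only [map_neg]
        have h7 := A7 t
        have h9 := A9 t
        simp only [one_pow, one_smul, sub_self, zero_smul, zero_add] at h7 h9
        linear_combination (norm := module) - h7 - h9
      · apply LinearMap.ext
        intro t
        simp only [LinearMap.comp_apply, LinearMap.sub_apply, LinearMap.add_apply,
          LinearMap.smul_apply, LinearMap.id_apply, LinearMap.zero_apply, one_pow, one_smul]
        apply hinj
        rw [map_zero]
        simp only [map_add, map_sub]
        rw [pcb1 t, pbc (opB1 b t)]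
        simp only [map_neg]
        have h8 := A8 t
        have h9 := A9 t
        simp only [one_pow, one_smul, sub_self, zero_smul, zero_add] at h8 h9
        linear_combination (norm := module) - h8 + h9
    · -- Hecke case lam ≠ 1
      have hlm1 : lam - 1 ≠ 0 := sub_ne_zero.mpr hl1
      have hccb1 : c ∘ₗ (c ∘ₗ opB1 b) = (lam - 1) • (c ∘ₗ opB1 b) + lam • opB1 b := by
        rw [← LinearMap.comp_assoc, hcc]
        simp only [LinearMap.add_comp, LinearMap.smul_comp, LinearMap.id_comp]
      have hccb2 : c ∘ₗ (c ∘ₗ opB2 b) = (lam - 1) • (c ∘ₗ opB2 b) + lam • opB2 b := by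
        rw [← LinearMap.comp_assoc, hcc]
        simp only [LinearMap.add_comp, LinearMap.smul_comp, LinearMap.id_comp]
      have E1 : c ∘ₗ (c ∘ₗ (opB1 b ∘ₗ opC2 c))
          = (lam - 1) • ((lam - 1) • (c ∘ₗ opB1 b) + lam • opB1 b)
            + lam • ((lam - 1) • (c ∘ₗ opB2 b) + lam • (opB1 b ∘ₗ opC2 c)) := by
        have h := congrArg (fun f => c ∘ₗ f) hcb1y
        simp only [LinearMap.comp_add, LinearMap.comp_smul] at h
        rw [hccb1, hcb2x] at h
        exact h
      have E2 : c ∘ₗ (c ∘ₗ (opB1 b ∘ₗ opC2 c))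
          = (lam - 1) • ((lam - 1) • (c ∘ₗ opB1 b) + lam • (opB2 b ∘ₗ opC1 c))
            + lam • (opB1 b ∘ₗ opC2 c) := by
        rw [← LinearMap.comp_assoc, hcc]
        simp only [LinearMap.add_comp, LinearMap.smul_comp, LinearMap.id_comp]
        rw [hcb1y]
      have E1' : c ∘ₗ (c ∘ₗ (opB2 b ∘ₗ opC1 c))
          = (lam - 1) • ((lam - 1) • (c ∘ₗ opB2 b) + lam • opB2 b)
            + lam • ((lam - 1) • (c ∘ₗ opB1 b) + lam • (opB2 b ∘ₗ opC1 c)) := by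
        have h := congrArg (fun f => c ∘ₗ f) hcb2x
        simp only [LinearMap.comp_add, LinearMap.comp_smul] at h
        rw [hccb2, hcb1y] at h
        exact h
      have E2' : c ∘ₗ (c ∘ₗ (opB2 b ∘ₗ opC1 c))
          = (lam - 1) • ((lam - 1) • (c ∘ₗ opB2 b) + lam • (opB1 b ∘ₗ opC2 c))
            + lam • (opB2 b ∘ₗ opC1 c) := by
        rw [← LinearMap.comp_assoc, hcc]
        simp only [LinearMap.add_comp, LinearMap.smul_comp, LinearMap.id_comp]
        rw [hcb2x]
      have H1 : opB1 b + opB1 b ∘ₗ opC2 c - opB2 b ∘ₗ opC1 c + c ∘ₗ opB2 b = 0 := by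
        have E12 : (lam * (lam - 1)) •
            (opB1 b + opB1 b ∘ₗ opC2 c - opB2 b ∘ₗ opC1 c + c ∘ₗ opB2 b) = 0 := by
          linear_combination (norm := module) E2 - E1
        rcases smul_eq_zero.mp E12 with h | h
        · exact absurd h (mul_ne_zero hlam0 hlm1)
        · exact h
      have H2 : opB2 b + opB2 b ∘ₗ opC1 c - opB1 b ∘ₗ opC2 c + c ∘ₗ opB1 b = 0 := by
        have E12 : (lam * (lam - 1)) •
            (opB2 b + opB2 b ∘ₗ opC1 c - opB1 b ∘ₗ opC2 c + c ∘ₗ opB1 b) = 0 := by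
          linear_combination (norm := module) E2' - E1'
        rcases smul_eq_zero.mp E12 with h | h
        · exact absurd h (mul_ne_zero hlam0 hlm1)
        · exact h
      have H1y : lam • (opB1 b ∘ₗ opC2 c) + lam • opB1 b - c ∘ₗ opB1 b - c ∘ₗ opB2 b = 0 := by
        have h := congrArg (fun f => f ∘ₗ opC2 c) H1
        simp only [LinearMap.add_comp, LinearMap.sub_comp, LinearMap.zero_comp,
          LinearMap.comp_assoc] at h
        rw [hyy, ← hcb1] at h
        simp only [LinearMap.comp_add, LinearMap.comp_smul, LinearMap.comp_id] at h
        rw [hb2y] at h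
        simp only [LinearMap.comp_neg] at h
        linear_combination (norm := module) h
      have H2x : lam • (opB2 b ∘ₗ opC1 c) + lam • opB2 b - c ∘ₗ opB2 b - c ∘ₗ opB1 b = 0 := by
        have h := congrArg (fun f => f ∘ₗ opC1 c) H2
        simp only [LinearMap.add_comp, LinearMap.sub_comp, LinearMap.zero_comp,
          LinearMap.comp_assoc] at h
        rw [hxx, ← hcb2] at h
        simp only [LinearMap.comp_add, LinearMap.comp_smul, LinearMap.comp_id] at h
        rw [hb1x] at h
        simp only [LinearMap.comp_neg] at h
        linear_combination (norm := module) h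
      -- pointwise vanishing of b ∘ b1 and b ∘ b2
      have KEY : ∀ t : V ⊗[K] (V ⊗[K] V),
          e (b (opB1 b t)) = 0 ∧ e (b (opB2 b t)) = 0 := by
        intro t
        have hA1 : M (opB1 b t) + M (opB1 b (opC2 c t)) - M (opB2 b (opC1 c t))
            + (lam • M (opB2 b t) + e (b (opB2 b t))) = 0 := by
          have h := LinearMap.congr_fun H1 t
          simp only [LinearMap.add_apply, LinearMap.sub_apply, LinearMap.comp_apply,
            LinearMap.zero_apply] at h
          have h2 := congrArg M h
          simp only [map_add, map_sub, map_zero] at h2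
          rw [FM (opB2 b t)] at h2
          exact h2
        have hA2 : M (opB2 b t) + M (opB2 b (opC1 c t)) - M (opB1 b (opC2 c t))
            + (lam • M (opB1 b t) + e (b (opB1 b t))) = 0 := by
          have h := LinearMap.congr_fun H2 t
          simp only [LinearMap.add_apply, LinearMap.sub_apply, LinearMap.comp_apply,
            LinearMap.zero_apply] at h
          have h2 := congrArg M h
          simp only [map_add, map_sub, map_zero] at h2
          rw [FM (opB1 b t)] at h2
          exact h2
        have hA3 : lam • M (opB1 b (opC2 c t)) + lam • M (opB1 b t)
            - (lam • M (opB1 b t) + e (b (opB1 b t)))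
            - (lam • M (opB2 b t) + e (b (opB2 b t))) = 0 := by
          have h := LinearMap.congr_fun H1y t
          simp only [LinearMap.add_apply, LinearMap.sub_apply, LinearMap.comp_apply,
            LinearMap.smul_apply, LinearMap.zero_apply] at h
          have h2 := congrArg M h
          simp only [map_add, map_sub, map_smul, map_zero] at h2
          rw [FM (opB1 b t), FM (opB2 b t)] at h2
          exact h2
        have hA4 : lam • M (opB2 b (opC1 c t)) + lam • M (opB2 b t)
            - (lam • M (opB2 b t) + e (b (opB2 b t)))
            - (lam • M (opB1 b t) + e (b (opB1 b t))) = 0 := by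
          have h := LinearMap.congr_fun H2x t
          simp only [LinearMap.add_apply, LinearMap.sub_apply, LinearMap.comp_apply,
            LinearMap.smul_apply, LinearMap.zero_apply] at h
          have h2 := congrArg M h
          simp only [map_add, map_sub, map_smul, map_zero] at h2
          rw [FM (opB2 b t), FM (opB1 b t)] at h2
          exact h2
        have hA5 : lam • e (b (opB1 b (opC2 c t))) + lam • e (b (opB1 b t))
            + e (b (opB1 b t)) + e (b (opB2 b t)) = 0 := by
          have h := LinearMap.congr_fun H1y t
          simp only [LinearMap.add_apply, LinearMap.sub_apply, LinearMap.comp_apply,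
            LinearMap.smul_apply, LinearMap.zero_apply] at h
          have h2 := congrArg (fun v => e (b v)) h
          simp only [map_add, map_sub, map_smul, map_zero] at h2
          rw [pbc (opB1 b t), pbc (opB2 b t)] at h2
          simp only [map_neg] at h2
          linear_combination (norm := module) h2
        have h7 := A7 t
        have h9 := A9 t
        -- scalar elimination
        have ha2 : (1 + lam) • M (opB2 b t) + e (b (opB2 b t)) = 0 := by
          have h : lam • ((1 + lam) • M (opB2 b t) + e (b (opB2 b t))) = 0 := by
            linear_combination (norm := module) lam • hA1 - hA3 + hA4
          rcases smul_eq_zero.mp h with h' | h'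
          · exact absurd h' hlam0
          · exact h'
        have ha1 : (1 + lam) • M (opB1 b t) + e (b (opB1 b t)) = 0 := by
          have h : lam • ((1 + lam) • M (opB1 b t) + e (b (opB1 b t))) = 0 := by
            linear_combination (norm := module) lam • hA2 - hA4 + hA3
          rcases smul_eq_zero.mp h with h' | h'
          · exact absurd h' hlam0
          · exact h'
        have hcp : e (b (opB1 b (opC2 c t))) - lam ^ 2 • M (opB1 b t)
            + lam • M (opB2 b t) - (lam - 1) • e (b (opB1 b t)) = 0 := by
          have h : lam • (e (b (opB1 b (opC2 c t))) - lam ^ 2 • M (opB1 b t)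
              + lam • M (opB2 b t) - (lam - 1) • e (b (opB1 b t))) = 0 := by
            linear_combination (norm := module) lam • h7 + lam • hA4 - lam • hA3
          rcases smul_eq_zero.mp h with h' | h'
          · exact absurd h' hlam0
          · exact h'
        have he' : lam ^ 3 • M (opB1 b t) - lam ^ 2 • M (opB2 b t)
            + (lam ^ 2 + 1) • e (b (opB1 b t)) + e (b (opB2 b t)) = 0 := by
          linear_combination (norm := module) hA5 - lam • hcp
        have hf : (1 + lam + lam ^ 2) • (e (b (opB1 b t)) + e (b (opB2 b t))) = 0 := by
          linear_combination (norm := module) (1 + lam) • he' - lam ^ 3 • ha1 + lam ^ 2 • ha2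
        have hg : e (b (opB1 b t)) + e (b (opB2 b t)) = 0 := by
          rcases smul_eq_zero.mp hf with h' | h'
          · exact absurd h' hl3
          · exact h'
        have hi : lam ^ 2 • M (opB1 b t) - lam ^ 2 • M (opB2 b t)
            - e (b (opB1 b t)) + e (b (opB2 b t)) = 0 := by
          have h : lam • (lam ^ 2 • M (opB1 b t) - lam ^ 2 • M (opB2 b t)
              - e (b (opB1 b t)) + e (b (opB2 b t))) = 0 := by
            linear_combination (norm := module) lam • h9 + lam • hA3 - lam • hA4
          rcases smul_eq_zero.mp h with h' | h'
          · exact absurd h' hlam0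
          · exact h'
        have hj : (1 + lam + lam ^ 2) • (e (b (opB2 b t)) - e (b (opB1 b t))) = 0 := by
          linear_combination (norm := module) (1 + lam) • hi - lam ^ 2 • ha1 + lam ^ 2 • ha2
        have hj' : e (b (opB2 b t)) - e (b (opB1 b t)) = 0 := by
          rcases smul_eq_zero.mp hj with h' | h'
          · exact absurd h' hl3
          · exact h'
        have h2j : (2 : K) • e (b (opB1 b t)) = 0 := by
          linear_combination (norm := module) hg - hj'
        have hj1 : e (b (opB1 b t)) = 0 := by
          rcases smul_eq_zero.mp h2j with h' | h'
          · exact absurd h' h2K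
          · exact h'
        refine ⟨hj1, ?_⟩
        linear_combination (norm := module) hg - hj1
      have Hbb1 : b ∘ₗ opB1 b = 0 := by
        apply LinearMap.ext
        intro t
        simp only [LinearMap.comp_apply, LinearMap.zero_apply]
        exact hinj (by rw [map_zero]; exact (KEY t).1)
      have Hbb2 : b ∘ₗ opB2 b = 0 := by
        apply LinearMap.ext
        intro t
        simp only [LinearMap.comp_apply, LinearMap.zero_apply]
        exact hinj (by rw [map_zero]; exact (KEY t).2)
      constructor
      · rw [← LinearMap.comp_assoc, Hbb1, LinearMap.zero_comp]
      · rw [← LinearMap.comp_assoc, Hbb2, LinearMap.zero_comp]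
  exact ⟨hbc, main.1, main.2⟩

end
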